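/- arXiv:2407.15120 — 2 statements merged into one kernel-verified Lean document; each statement's English description precedes it below -/
import Mathlib

section
/- For every integer n ≥ 1, the 2-rank of the special orthogonal group SO(n) of n×n real orthogonal matrices of determinant 1 equals n − 1. -/
/-- The set of natural numbers `r` such that the group `G` contains a subgroup isomorphic to
the elementary abelian 2-group `(ℤ/2ℤ)^r`. -/
def elementaryTwoRanks (G : Type*) [Group G] : Set ℕ :=
  {r | ∃ H : Subgroup G, Nonempty (H ≃* Multiplicative (Fin r → ZMod 2))}

/-- The 2-rank `r₂(G)` of a group `G`: the supremum of the integers `r` such that `G` contains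
a subgroup isomorphic to the elementary abelian 2-group `(ℤ/2ℤ)^r`. -/
noncomputable def twoRank (G : Type*) [Group G] : ℕ :=
  sSup (elementaryTwoRanks G)

/-- The determinant, as a homomorphism from the orthogonal group into the unitary scalars. -/
def orthogonalDet (n : ℕ) : Matrix.orthogonalGroup (Fin n) ℝ →* unitary ℝ where
  toFun A := ⟨(A : Matrix (Fin n) (Fin n) ℝ).det, Matrix.det_of_mem_unitary A.2⟩
  map_one' := by ext; simp
  map_mul' := by intro a b; ext; simp

/-- The special orthogonal group `SO(n)`: real orthogonal `n × n` matrices of determinant one,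
as the kernel of the determinant homomorphism on the orthogonal group. -/
def SO (n : ℕ) : Subgroup (Matrix.orthogonalGroup (Fin n) ℝ) := (orthogonalDet n).ker

/-! ### Auxiliary sign lemmas -/

/-- The sign of an element of `ZMod 2`, as a real number. -/
noncomputable def sgn (a : ZMod 2) : ℝ := if a = 0 then 1 else -1

lemma zmod2_cases (a : ZMod 2) : a = 0 ∨ a = 1 := by revert a; decide

lemma sgn_zero : sgn 0 = 1 := by simp [sgn]

lemma sgn_add (a b : ZMod 2) : sgn (a + b) = sgn a * sgn b := by
  rcases zmod2_cases a with rfl | rfl <;> rcases zmod2_cases b with rfl | rfl <;>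
    norm_num [sgn] <;> decide

lemma sgn_mul_self (a : ZMod 2) : sgn a * sgn a = 1 := by
  rcases zmod2_cases a with rfl | rfl <;> norm_num [sgn]

lemma sgn_eq_one_iff (a : ZMod 2) : sgn a = 1 ↔ a = 0 := by
  rcases zmod2_cases a with rfl | rfl <;> norm_num [sgn] <;> decide

lemma prod_sgn {ι : Type*} (F : Finset ι) (g : ι → ZMod 2) :
    ∏ i ∈ F, sgn (g i) = sgn (∑ i ∈ F, g i) := by
  classical
  induction F using Finset.induction with
  | empty => simp [sgn_zero]
  | insert _ _ hx ih =>
    rw [Finset.prod_insert hx, Finset.sum_insert hx, sgn_add, ih]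

/-- Parity of a product of signs. -/
lemma sign_prod_parity {ι : Type*} (F : Finset ι) (f : ι → ℝ) (c : ι → ZMod 2)
    (h : ∀ i ∈ F, (f i = 1 ∧ c i = 0) ∨ (f i = -1 ∧ c i = 1)) :
    (∏ i ∈ F, f i = 1 ∧ ∑ i ∈ F, c i = 0) ∨ (∏ i ∈ F, f i = -1 ∧ ∑ i ∈ F, c i = 1) := by
  classical
  induction F using Finset.induction with
  | empty => simp
  | @insert x F hx ih =>
    have hx' := h x (Finset.mem_insert_self x F)
    have ih' := ih (fun i hi => h i (Finset.mem_insert_of_mem hi))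
    rw [Finset.prod_insert hx, Finset.sum_insert hx]
    rcases hx' with ⟨hf, hc⟩ | ⟨hf, hc⟩ <;> rcases ih' with ⟨hF, hC⟩ | ⟨hF, hC⟩ <;>
      rw [hf, hc, hF, hC] <;> norm_num <;> decide

/-! ### The counting lemma -/

lemma count_aux {α : Type*} [Finite α] {ι : Type*} [DecidableEq ι] (F : Finset ι) (d : ι → ℕ)
    (n : ℕ) (φ : α → ι → ZMod 2)
    (hinj : ∀ a b : α, (∀ χ ∈ F, φ a χ = φ b χ) → a = b)
    (hpar : ∀ a, ∑ χ ∈ F, (d χ : ZMod 2) * φ a χ = 0)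
    (hpos : ∀ χ ∈ F, 1 ≤ d χ)
    (hsum : ∑ χ ∈ F, d χ = n) (hn : 1 ≤ n) :
    Nat.card α ≤ 2 ^ (n - 1) := by
  classical
  have hcardF : F.card ≤ n := by
    calc F.card = ∑ _χ ∈ F, 1 := by simp
    _ ≤ ∑ χ ∈ F, d χ := Finset.sum_le_sum hpos
    _ = n := hsum
  by_cases hodd : ∃ χ₀ ∈ F, ¬ (2 ∣ d χ₀)
  · obtain ⟨χ₀, hχ₀F, hχ₀⟩ := hodd
    have hd1 : (d χ₀ : ZMod 2) = 1 := by
      have h2 : d χ₀ % 2 = 1 := Nat.odd_iff.mp (Nat.not_even_iff_odd.mp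
        (fun he => hχ₀ he.two_dvd))
      rw [← ZMod.natCast_mod, h2, Nat.cast_one]
    set F' := F.erase χ₀ with hF'
    -- value at χ₀ is determined by the others
    have hdet : ∀ a : α, φ a χ₀ = ∑ χ ∈ F', (d χ : ZMod 2) * φ a χ := by
      intro a
      have h1 : (d χ₀ : ZMod 2) * φ a χ₀ + ∑ χ ∈ F.erase χ₀, (d χ : ZMod 2) * φ a χ = 0 := by
        have h0 := hpar a
        rwa [← Finset.add_sum_erase _ (fun χ => (d χ : ZMod 2) * φ a χ) hχ₀F] at h0
      have h2 := eq_neg_of_add_eq_zero_left h1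
      rw [hd1, one_mul] at h2
      rw [hF', h2, CharTwo.neg_eq]
    have hinj' : Function.Injective (fun (a : α) (x : ↥F') => φ a x.1) := by
      intro a b hab
      have hab' : ∀ χ ∈ F', φ a χ = φ b χ := fun χ hχ => congrFun hab ⟨χ, hχ⟩
      refine hinj a b (fun χ hχ => ?_)
      by_cases hc : χ = χ₀
      · subst hc
        rw [hdet a, hdet b]
        exact Finset.sum_congr rfl (fun χ' hχ' => by rw [hab' χ' hχ'])
      · exact hab' χ (Finset.mem_erase.mpr ⟨hc, hχ⟩)
    have hcard := Nat.card_le_card_of_injective _ hinj'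
    have h2 : Nat.card (↥F' → ZMod 2) = 2 ^ F'.card := by
      rw [Nat.card_fun, Nat.card_eq_fintype_card, Nat.card_eq_fintype_card,
        Fintype.card_coe, ZMod.card]
    rw [h2] at hcard
    refine hcard.trans (Nat.pow_le_pow_right (by norm_num) ?_)
    rw [hF', Finset.card_erase_of_mem hχ₀F]
    omega
  · -- all multiplicities even
    push_neg at hodd
    rcases Finset.eq_empty_or_nonempty F with rfl | hFne
    · have : Subsingleton α := ⟨fun a b => hinj a b (by simp)⟩
      have h1 := Nat.card_le_card_of_injective (fun a : α => (default : Unit))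
        (fun a b _ => Subsingleton.elim a b)
      simp only [Nat.card_unique] at h1
      exact h1.trans Nat.one_le_two_pow
    · have hF2 : 2 * F.card ≤ n := by
        calc 2 * F.card = ∑ _χ ∈ F, 2 := by rw [Finset.sum_const, smul_eq_mul, mul_comm]
        _ ≤ ∑ χ ∈ F, d χ := Finset.sum_le_sum (fun χ hχ => Nat.le_of_dvd (hpos χ hχ) (hodd χ hχ))
        _ = n := hsum
      have hinj' : Function.Injective (fun (a : α) (x : ↥F) => φ a x.1) := by
        intro a b hab
        exact hinj a b (fun χ hχ => congrFun hab ⟨χ, hχ⟩)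
      have hcard := Nat.card_le_card_of_injective _ hinj'
      have h2 : Nat.card (↥F → ZMod 2) = 2 ^ F.card := by
        rw [Nat.card_fun, Nat.card_eq_fintype_card, Nat.card_eq_fintype_card,
          Fintype.card_coe, ZMod.card]
      rw [h2] at hcard
      refine hcard.trans (Nat.pow_le_pow_right (by norm_num) ?_)
      have := hFne.card_pos
      omega
    

/-! ### The upper bound -/

set_option maxHeartbeats 2000000 in
set_option synthInstance.maxHeartbeats 1000000 in
lemma upper_aux {n r : ℕ} (hn : 1 ≤ n) (H : Subgroup (SO n))
    (e : ↥H ≃* Multiplicative (Fin r → ZMod 2)) : r ≤ n - 1 := by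
  classical
  haveI : Finite ↥H := Finite.of_equiv _ e.symm.toEquiv
  have emul : ∀ a b : ↥H, e (a * b) = e a * e b := map_mul e
  have eone : e 1 = 1 := map_one e
  -- the matrix attached to an element of `H`
  set M : ↥H → Matrix (Fin n) (Fin n) ℝ := fun h =>
    (((h : ↥(SO n)) : Matrix.orthogonalGroup (Fin n) ℝ) : Matrix (Fin n) (Fin n) ℝ) with hM
  have hM_mul : ∀ a b : ↥H, M (a * b) = M a * M b := fun a b => rfl
  have hM_one : M 1 = 1 := rfl
  have hM_inj : Function.Injective M := by
    intro a b hab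
    exact Subtype.ext (Subtype.ext (Subtype.ext hab))
  have horder : ∀ h : ↥H, h * h = 1 := by
    intro h
    apply e.injective
    rw [emul, eone]
    apply Multiplicative.toAdd.injective
    rw [toAdd_mul, toAdd_one]
    funext i
    exact CharTwo.add_self_eq_zero _
  have hcommH : ∀ a b : ↥H, a * b = b * a := by
    intro a b
    apply e.injective
    rw [emul, emul, mul_comm]
  have hM2 : ∀ h, M h * M h = 1 := fun h => by rw [← hM_mul, horder, hM_one]
  have hHerm : ∀ h, (M h).IsHermitian := by
    intro h
    have hu : star (M h) * M h = 1 :=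
      (Matrix.mem_orthogonalGroup_iff' (Fin n) ℝ).mp
        ((h : ↥(SO n)) : Matrix.orthogonalGroup (Fin n) ℝ).2
    have hs : star (M h) = M h := by
      calc star (M h) = star (M h) * (M h * M h) := by rw [hM2, mul_one]
      _ = star (M h) * M h * M h := by rw [mul_assoc]
      _ = M h := by rw [hu, one_mul]
    rw [Matrix.IsHermitian, ← Matrix.star_eq_conjTranspose]
    exact hs
  -- The associated family of symmetric operators on Euclidean space
  set T : ↥H → (EuclideanSpace ℝ (Fin n) →ₗ[ℝ] EuclideanSpace ℝ (Fin n)) := fun h =>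
    Matrix.toEuclideanLin (M h) with hT
  have hT_mul : ∀ a b : ↥H, T (a * b) = T a ∘ₗ T b := by
    intro a b
    rw [hT]
    simp only
    rw [hM_mul, Matrix.toEuclideanLin_eq_toLin]
    exact Matrix.toLin_mul _ _ _ _ _
  have hT_one : T 1 = LinearMap.id := by
    rw [hT]
    simp only
    rw [hM_one, Matrix.toEuclideanLin_eq_toLin]
    exact Matrix.toLin_one _
  have hTsym : ∀ h, (T h).IsSymmetric := fun h => Matrix.isHermitian_iff_isSymmetric.mp (hHerm h)
  have hTpair : Pairwise (Function.onFun Commute T) := by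
    intro a b _
    show T a * T b = T b * T a
    rw [Module.End.mul_eq_comp, Module.End.mul_eq_comp, ← hT_mul, ← hT_mul, hcommH]
  have htop := LinearMap.IsSymmetric.iSup_iInf_eq_top_of_commute hTsym hTpair
  set V : (↥H → ℝ) → Submodule ℝ (EuclideanSpace ℝ (Fin n)) := fun χ =>
    ⨅ h, Module.End.eigenspace (T h) (χ h) with hV
  have hact : ∀ χ (h : ↥H) v, v ∈ V χ → T h v = χ h • v := by
    intro χ h v hv
    rw [hV] at hv
    simp only [Submodule.mem_iInf] at hv
    exact Module.End.mem_eigenspace_iff.mp (hv h)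
  have heig : ∀ χ, V χ ≠ ⊥ → ∀ h : ↥H, χ h = 1 ∨ χ h = -1 := by
    intro χ hχ h
    obtain ⟨v, hv, hv0⟩ := Submodule.ne_bot_iff _ |>.mp hχ
    have h1 : T h (T h v) = v := by
      have h2 : T h ∘ₗ T h = LinearMap.id := by rw [← hT_mul, horder, hT_one]
      calc T h (T h v) = (T h ∘ₗ T h) v := rfl
      _ = v := by rw [h2]; rfl
    rw [hact χ h v hv, map_smul, hact χ h v hv, smul_smul] at h1
    have h3 : (χ h * χ h - 1) • v = 0 := by
      rw [sub_smul, one_smul, h1, sub_self]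
    rcases smul_eq_zero.mp h3 with h4 | h4
    · exact mul_self_eq_one_iff.mp (sub_eq_zero.mp h4)
    · exact absurd h4 hv0
  -- the joint eigenspace decomposition
  have hInt : DirectSum.IsInternal V :=
    LinearMap.IsSymmetric.LinearMap.IsSymmetric.directSum_isInternal_of_pairwise_commute
      hTsym hTpair
  set d : (↥H → ℝ) → ℕ := fun χ => Module.finrank ℝ (V χ) with hd
  set cb := hInt.collectedBasis (fun χ => Module.finBasis ℝ (V χ)) with hcb
  haveI : Fintype (Σ χ : ↥H → ℝ, Fin (d χ)) := FiniteDimensional.fintypeBasisIndex cb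
  have hcb_mem : ∀ p : (Σ χ : ↥H → ℝ, Fin (d χ)), cb p ∈ V p.1 := fun p =>
    hInt.collectedBasis_mem _ p
  have hd0 : ∀ χ, V χ = ⊥ → d χ = 0 := by
    intro χ hbot
    rw [hd]; simp only; rw [hbot, finrank_bot]
  have hSp : ∀ p : (Σ χ : ↥H → ℝ, Fin (d χ)), V p.1 ≠ ⊥ := by
    intro p hbot
    have hlt := p.2.isLt
    exact Nat.not_lt_zero _ (lt_of_lt_of_le hlt (hd0 p.1 hbot).le)
  -- the matrix of `T h` in the collected basis is diagonal
  have hdiagmat : ∀ h, LinearMap.toMatrix cb cb (T h)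
      = Matrix.diagonal (fun p : (Σ χ : ↥H → ℝ, Fin (d χ)) => p.1 h) := by
    intro h
    ext p q
    rw [LinearMap.toMatrix_apply, hact q.1 h (cb q) (hcb_mem q), map_smul, Module.Basis.repr_self,
      Matrix.diagonal_apply, Finsupp.smul_apply, Finsupp.single_apply, smul_eq_mul]
    by_cases hpq : p = q
    · subst hpq; simp
    · rw [if_neg hpq, if_neg (Ne.symm hpq), mul_zero]
  -- the determinant of `T h` is the product of joint eigenvalues, and equals 1
  have hdet1 : ∀ h : ↥H, (M h).det = 1 := by
    intro h
    have hker : (h : ↥(SO n)).1 ∈ (orthogonalDet n).ker := (h : ↥(SO n)).2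
    rw [MonoidHom.mem_ker] at hker
    exact congrArg Subtype.val hker
  have hproddet : ∀ h : ↥H, ∏ p : (Σ χ : ↥H → ℝ, Fin (d χ)), p.1 h = 1 := by
    intro h
    have h1 : LinearMap.det (T h) = (M h).det := by
      rw [hT]; simp only; rw [Matrix.toEuclideanLin_eq_toLin]
      exact LinearMap.det_toLin _ _
    have h2 : LinearMap.det (T h) = ∏ p : (Σ χ : ↥H → ℝ, Fin (d χ)), p.1 h := by
      rw [← LinearMap.det_toMatrix cb, hdiagmat, Matrix.det_diagonal]
    rw [← h2, h1, hdet1]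
  -- the finite set of joint eigenvalue functions
  haveI hFT : Fintype {χ : ↥H → ℝ // V χ ≠ ⊥} :=
    ((LinearMap.IsSymmetric.orthogonalFamily_iInf_eigenspaces
      hTsym).independent).fintypeNeBotOfFiniteDimensional
  have hSfin : {χ : ↥H → ℝ | V χ ≠ ⊥}.Finite :=
    Set.finite_coe_iff.mp (@Finite.of_fintype _ hFT)
  set Sfin := hSfin.toFinset with hSfin'
  have hmemS : ∀ χ, χ ∈ Sfin ↔ V χ ≠ ⊥ := fun χ => hSfin.mem_toFinset
  have huniv : (Finset.univ : Finset (Σ χ : ↥H → ℝ, Fin (d χ)))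
      = Sfin.sigma (fun χ => Finset.univ) := by
    ext p
    simp only [Finset.mem_univ, Finset.mem_sigma, true_iff, true_and]
    exact ⟨(hmemS p.1).mpr (hSp p), trivial⟩
  have hsum : ∑ χ ∈ Sfin, d χ = n := by
    have h1 : Module.finrank ℝ (EuclideanSpace ℝ (Fin n))
        = Fintype.card (Σ χ : ↥H → ℝ, Fin (d χ)) := Module.finrank_eq_card_basis cb
    rw [finrank_euclideanSpace_fin] at h1
    rw [← Finset.card_univ, huniv, Finset.card_sigma] at h1
    simp only [Finset.card_univ, Fintype.card_fin] at h1
    exact h1.symm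
  set φ : ↥H → (↥H → ℝ) → ZMod 2 := fun h χ => if χ h = 1 then 0 else 1 with hφ
  have hpar : ∀ h : ↥H, ∑ χ ∈ Sfin, (d χ : ZMod 2) * φ h χ = 0 := by
    intro h
    have hsp := sign_prod_parity (Finset.univ : Finset (Σ χ : ↥H → ℝ, Fin (d χ)))
      (fun p => p.1 h) (fun p => φ h p.1) ?_
    · have hconv : ∑ χ ∈ Sfin, (d χ : ZMod 2) * φ h χ
          = ∑ p : (Σ χ : ↥H → ℝ, Fin (d χ)), φ h p.1 := by
        rw [huniv, Finset.sum_sigma]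
        refine Finset.sum_congr rfl (fun χ _ => ?_)
        show (d χ : ZMod 2) * φ h χ = ∑ _s : Fin (d χ), φ h χ
        rw [Finset.sum_const, Finset.card_univ, Fintype.card_fin, nsmul_eq_mul]
      rcases hsp with ⟨_, hsum0⟩ | ⟨hprod, _⟩
      · rw [hconv]; exact hsum0
      · rw [hproddet h] at hprod; norm_num at hprod
    · intro p _
      rcases heig p.1 (hSp p) h with h1 | h1
      · exact Or.inl ⟨h1, by rw [hφ]; simp only; rw [if_pos h1]⟩
      · exact Or.inr ⟨h1, by rw [hφ]; simp only; rw [if_neg (by rw [h1]; norm_num)]⟩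
  have hinj : ∀ a b : ↥H, (∀ χ ∈ Sfin, φ a χ = φ b χ) → a = b := by
    intro a b hab
    have hval : ∀ χ, V χ ≠ ⊥ → χ a = χ b := by
      intro χ hb
      have hthis := hab χ ((hmemS χ).mpr hb)
      rw [hφ] at hthis; simp only at hthis
      rcases heig χ hb a with h1 | h1
      · rcases heig χ hb b with h2 | h2
        · rw [h1, h2]
        · exfalso
          rw [h1, h2, if_pos rfl, if_neg (by norm_num : ¬ (-1:ℝ) = 1)] at hthis
          exact (by decide : (0:ZMod 2) ≠ 1) hthis
      · rcases heig χ hb b with h2 | h2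
        · exfalso
          rw [h1, h2, if_pos rfl, if_neg (by norm_num : ¬ (-1:ℝ) = 1)] at hthis
          exact (by decide : (0:ZMod 2) ≠ 1) hthis.symm
        · rw [h1, h2]
    have hTa : T a = T b := by
      have hker : ∀ χ, V χ ≤ LinearMap.ker (T a - T b) := by
        intro χ
        by_cases hb : V χ = ⊥
        · rw [hb]; exact bot_le
        · intro v hv
          rw [LinearMap.mem_ker, LinearMap.sub_apply, hact χ a v hv, hact χ b v hv,
            hval χ hb, sub_self]
      have htop' : LinearMap.ker (T a - T b) = ⊤ := top_unique (htop ▸ iSup_le hker)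
      exact sub_eq_zero.mp (LinearMap.ker_eq_top.mp htop')
    apply hM_inj
    exact Matrix.toEuclideanLin.injective hTa
  have hpos : ∀ χ ∈ Sfin, 1 ≤ d χ := by
    intro χ hχ
    rw [Nat.one_le_iff_ne_zero]
    intro h0
    exact absurd (Submodule.finrank_eq_zero.mp h0) ((hmemS χ).mp hχ)
  have hcount := count_aux Sfin d n φ hinj hpar hpos hsum hn
  have hcardH : Nat.card ↥H = 2 ^ r := by
    rw [Nat.card_congr e.toEquiv, Nat.card_congr Multiplicative.toAdd, Nat.card_fun,
      Nat.card_zmod, Nat.card_eq_fintype_card, Fintype.card_fin]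
  rw [hcardH] at hcount
  exact (Nat.pow_le_pow_iff_right (by norm_num)).mp hcount

/-! ### The lower bound: diagonal sign matrices -/

/-- Extension of a sign vector by the entry making the total sum zero. -/
noncomputable def Wext {m : ℕ} (v : Fin m → ZMod 2) : Fin (m + 1) → ZMod 2 :=
  Fin.snoc v (∑ i, v i)

lemma Wext_add {m : ℕ} (v v' : Fin m → ZMod 2) : Wext (v + v') = Wext v + Wext v' := by
  funext j
  induction j using Fin.lastCases with
  | last => simp [Wext, Fin.snoc_last, Finset.sum_add_distrib]
  | cast i => simp [Wext, Fin.snoc_castSucc]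

lemma sum_Wext {m : ℕ} (v : Fin m → ZMod 2) : ∑ j, Wext v j = 0 := by
  rw [Fin.sum_univ_castSucc]
  simp only [Wext, Fin.snoc_castSucc, Fin.snoc_last]
  exact CharTwo.add_self_eq_zero _

/-- The diagonal sign matrix attached to a sign vector. -/
noncomputable def Dmat {m : ℕ} (v : Fin m → ZMod 2) : Matrix (Fin (m + 1)) (Fin (m + 1)) ℝ :=
  Matrix.diagonal (fun j => sgn (Wext v j))

lemma Dmat_mem {m : ℕ} (v : Fin m → ZMod 2) :
    Dmat v ∈ Matrix.orthogonalGroup (Fin (m + 1)) ℝ := by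
  rw [Matrix.mem_orthogonalGroup_iff, Dmat,
    Matrix.diagonal_transpose, Matrix.diagonal_mul_diagonal]
  have : ∀ j, sgn (Wext v j) * star (sgn (Wext v j)) = 1 := by
    intro j; rw [star_trivial]; exact sgn_mul_self _
  simp only [sgn_mul_self]
  exact Matrix.diagonal_one

lemma Dmat_det {m : ℕ} (v : Fin m → ZMod 2) : (Dmat v).det = 1 := by
  rw [Dmat, Matrix.det_diagonal, prod_sgn, sum_Wext, sgn_zero]

lemma Dmat_mul {m : ℕ} (v v' : Fin m → ZMod 2) : Dmat (v + v') = Dmat v * Dmat v' := by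
  have h : (fun j => sgn (Wext (v + v') j)) = fun j => sgn (Wext v j) * sgn (Wext v' j) := by
    funext j; rw [Wext_add, Pi.add_apply, sgn_add]
  rw [Dmat, Dmat, Dmat, Matrix.diagonal_mul_diagonal, h]

/-- The embedding of the elementary abelian `2`-group of rank `m` into `SO (m+1)`. -/
noncomputable def fSO (m : ℕ) : Multiplicative (Fin m → ZMod 2) →* ↥(SO (m + 1)) :=
  MonoidHom.mk' (fun x =>
    ⟨⟨Dmat (Multiplicative.toAdd x), Dmat_mem _⟩, by
      rw [SO, MonoidHom.mem_ker]
      exact Subtype.ext (Dmat_det _)⟩)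
    (fun x y => by
      apply Subtype.ext; apply Subtype.ext
      show Dmat (Multiplicative.toAdd x + Multiplicative.toAdd y)
          = Dmat (Multiplicative.toAdd x) * Dmat (Multiplicative.toAdd y)
      exact Dmat_mul _ _)

lemma fSO_inj (m : ℕ) : Function.Injective (fSO m) := by
  rw [injective_iff_map_eq_one]
  intro x hx
  have h1 : Dmat (Multiplicative.toAdd x) = 1 := by
    have := congrArg (fun z : ↥(SO (m + 1)) => ((z : Matrix.orthogonalGroup (Fin (m + 1)) ℝ) :
      Matrix (Fin (m + 1)) (Fin (m + 1)) ℝ)) hx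
    exact this
  have h2 : Multiplicative.toAdd x = 0 := by
    funext i
    have h3 := congrFun (congrFun h1 i.castSucc) i.castSucc
    rw [Dmat, Matrix.diagonal_apply_eq, Matrix.one_apply_eq] at h3
    rw [Wext, Fin.snoc_castSucc] at h3
    exact (sgn_eq_one_iff _).mp h3
  calc x = Multiplicative.ofAdd (Multiplicative.toAdd x) := rfl
  _ = Multiplicative.ofAdd 0 := by rw [h2]
  _ = 1 := rfl

/-- The 2-rank of the special orthogonal group `SO(n)` equals `n - 1`. -/
theorem twoRank_specialOrthogonalGroup (n : ℕ) (hn : 1 ≤ n) : twoRank (SO n) = n - 1 := by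
  obtain ⟨m, rfl⟩ : ∃ m, n = m + 1 := ⟨n - 1, by omega⟩
  have hmem : m ∈ elementaryTwoRanks (SO (m + 1)) :=
    ⟨(fSO m).range, ⟨(MonoidHom.ofInjective (fSO_inj m)).symm⟩⟩
  have hub : ∀ b ∈ elementaryTwoRanks (SO (m + 1)), b ≤ m := by
    rintro b ⟨H, ⟨e⟩⟩
    simpa using upper_aux (by omega) H e
  rw [twoRank]
  simp only [Nat.add_sub_cancel]
  exact le_antisymm (csSup_le ⟨m, hmem⟩ hub) (le_csSup ⟨m, hub⟩ hmem)
end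

section
/- For every integer n ≥ 1, the 2-rank of the compact symplectic group Sp(n), realized as the group of n×n quaternionic matrices A with A·A* = I (the quaternionic unitary group), equals n. -/
/-- The compact symplectic group `Sp(n)`: the group of `n × n` quaternionic matrices `A` with
`A * star A = 1`, i.e. the unitary group of the quaternionic matrix algebra. -/
noncomputable abbrev SpGroup (n : ℕ) := unitary (Matrix (Fin n) (Fin n) (Quaternion ℝ))

open MulOpposite in
/-- Columns with entries in `ℍ` as a right module, via the opposite ring. -/
private def opPiEquiv (K : Type*) [Ring K] (n : ℕ) :
    (Fin n → K) ≃ₗ[Kᵐᵒᵖ] (Fin n → Kᵐᵒᵖ) where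
  toFun x i := op (x i)
  invFun y i := unop (y i)
  map_add' x y := by funext i; simp
  map_smul' c x := by
    funext i
    simp only [Pi.smul_apply, RingHom.id_apply, smul_eq_mul]
    rw [← MulOpposite.op_unop c, op_smul_eq_mul, MulOpposite.op_mul, MulOpposite.op_unop]
  left_inv x := by funext i; simp
  right_inv y := by funext i; simp

namespace SpAux

variable {R : Type*} [CommRing R] {r : ℕ}

/-- the sign `(-1)^ε`. -/
def sgn (R : Type*) [Ring R] (ε : ZMod 2) : R := if ε = 0 then 1 else -1

lemma sgn_mul_self (ε : ZMod 2) : sgn R ε * sgn R ε = 1 := by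
  unfold sgn; split <;> ring

lemma sgn_zero : sgn R 0 = 1 := if_pos rfl

lemma sgn_one : sgn R 1 = -1 := if_neg (by decide)

lemma sgn_eq_pow (ε : ZMod 2) : sgn R ε = (-1 : R) ^ ε.val := by
  have : ε = 0 ∨ ε = 1 := by revert ε; decide
  rcases this with h | h <;> subst h <;> simp [sgn, ZMod.val_one]

variable (a : Fin r → R)

/-- unnormalized spectral projector factor. -/
def q (i : Fin r) (ε : ZMod 2) : R := 1 + sgn R ε * a i

/-- unnormalized joint spectral projector. -/
def eproj (δ : Fin r → ZMod 2) : R := ∏ i, q a i (δ i)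

/-- the image of a group element. -/
def bmat (s : Fin r → ZMod 2) : R := ∏ i, a i ^ (s i).val

/-- the value of the character indexed by `δ` at the group element `s`. -/
def ts (R : Type*) [CommRing R] (s δ : Fin r → ZMod 2) : R :=
  ∏ i, sgn R (δ i) ^ (s i).val

variable (ha : ∀ i, a i * a i = 1)

lemma q_add (i : Fin r) : q a i 0 + q a i 1 = 2 := by
  simp [q, sgn]; ring

include ha in
lemma q_mul_q_ne {i : Fin r} {ε ε' : ZMod 2} (h : ε ≠ ε') : q a i ε * q a i ε' = 0 := by
  have h01 : (ε = 0 ∧ ε' = 1) ∨ (ε = 1 ∧ ε' = 0) := by revert h; revert ε ε'; decide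
  have := ha i
  rcases h01 with ⟨h1, h2⟩ | ⟨h1, h2⟩ <;> subst h1 <;> subst h2 <;>
    · simp only [q, sgn_zero, sgn_one]
      linear_combination -this

include ha in
lemma a_mul_q (i : Fin r) (ε : ZMod 2) : a i * q a i ε = sgn R ε * q a i ε := by
  have h1 := ha i
  have h2 := sgn_mul_self (R := R) ε
  simp only [q]
  linear_combination sgn R ε * h1 - a i * h2

include ha in
lemma q_sq (i : Fin r) (ε : ZMod 2) : q a i ε * q a i ε = 2 * q a i ε := by
  have h1 := ha i
  have h2 := sgn_mul_self (R := R) ε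
  simp only [q]
  linear_combination (sgn R ε * sgn R ε) * h1 + h2

lemma sum_eproj : ∑ δ : Fin r → ZMod 2, eproj a δ = 2 ^ r := by
  classical
  have := Finset.prod_univ_sum (fun _ : Fin r => (Finset.univ : Finset (ZMod 2)))
      (fun i ε => q a i ε)
  rw [Fintype.piFinset_univ] at this
  simp only [eproj]
  rw [← this]
  have h2 : ∀ i : Fin r, ∑ ε : ZMod 2, q a i ε = 2 := by
    intro i
    have h3 : ∑ ε : ZMod 2, q a i ε = q a i 0 + q a i 1 := Fin.sum_univ_two _
    rw [h3]; exact q_add a i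
  rw [Finset.prod_congr rfl fun i _ => h2 i]
  simp

include ha in
lemma eproj_mul_ne {δ δ' : Fin r → ZMod 2} (h : δ ≠ δ') : eproj a δ * eproj a δ' = 0 := by
  classical
  obtain ⟨i, hi⟩ := Function.ne_iff.mp h
  rw [eproj, eproj, ← Finset.prod_mul_distrib]
  exact Finset.prod_eq_zero (Finset.mem_univ i) (q_mul_q_ne a ha hi)

include ha in
lemma eproj_mul_self (δ : Fin r → ZMod 2) : eproj a δ * eproj a δ = 2 ^ r * eproj a δ := by
  classical
  rw [eproj, ← Finset.prod_mul_distrib]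
  have : ∀ i : Fin r, q a i (δ i) * q a i (δ i) = 2 * q a i (δ i) := fun i => q_sq a ha i _
  rw [Finset.prod_congr rfl fun i _ => this i, Finset.prod_mul_distrib]
  simp

include ha in
lemma bmat_mul_eproj (s δ : Fin r → ZMod 2) :
    bmat a s * eproj a δ = ts R s δ * eproj a δ := by
  classical
  rw [bmat, ts, eproj, ← Finset.prod_mul_distrib, ← Finset.prod_mul_distrib]
  refine Finset.prod_congr rfl fun i _ => ?_
  have hv : (s i).val = 0 ∨ (s i).val = 1 := by
    have := ZMod.val_lt (s i); omega
  rcases hv with hv | hv <;> rw [hv]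
  · simp
  · simp only [pow_one]
    exact a_mul_q a ha i _

lemma ts_eq_one {s δ : Fin r → ZMod 2} (h : ∑ i, s i * δ i = 0) : ts R s δ = 1 := by
  classical
  rw [ts]
  have : ∀ i : Fin r, sgn R (δ i) ^ (s i).val = (-1 : R) ^ ((s i).val * (δ i).val) := by
    intro i
    rw [sgn_eq_pow, ← pow_mul, mul_comm]
  rw [Finset.prod_congr rfl fun i _ => this i, Finset.prod_pow_eq_pow_sum]
  apply Even.neg_one_pow
  rw [← ZMod.natCast_eq_zero_iff_even, Nat.cast_sum]
  rw [← h]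
  refine Finset.sum_congr rfl fun i _ => ?_
  push_cast
  rw [ZMod.natCast_rightInverse (s i), ZMod.natCast_rightInverse (δ i)]

end SpAux

private instance : CharZero (Quaternion ℝ) :=
  charZero_of_injective_algebraMap (algebraMap ℝ (Quaternion ℝ)).injective

open Matrix in
private lemma mulVec_finset_sum {m n α : Type*} [NonUnitalNonAssocSemiring α] [Fintype n]
    (M : Matrix m n α) {ι : Type*} (t : Finset ι) (f : ι → n → α) :
    M *ᵥ (∑ i ∈ t, f i) = ∑ i ∈ t, M *ᵥ f i := by
  classical
  induction t using Finset.induction_on with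
  | empty => simp [Matrix.mulVec_zero]
  | insert _ _ h ih => simp [Finset.sum_insert h, Matrix.mulVec_add, ih]

open Matrix in
private lemma nsmul_mulVec {m n α : Type*} [NonUnitalNonAssocSemiring α] [Fintype n]
    (k : ℕ) (M : Matrix m n α) (w : n → α) :
    (k • M) *ᵥ w = k • (M *ᵥ w) := by
  ext i
  simp [Matrix.mulVec, dotProduct, Finset.smul_sum, smul_mul_assoc]

open SpAux Matrix in
/-- Abstract counting argument: a commutative ring of `n × n` quaternionic matrices containing
`r` "independent" square roots of `1` forces `r ≤ n`. -/
private lemma aux_count {n r : ℕ} (R : Type*) [CommRing R]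
    (ρ : R →+* Matrix (Fin n) (Fin n) (Quaternion ℝ)) (hρ : Function.Injective ρ)
    (a : Fin r → R) (ha : ∀ i, a i * a i = 1)
    (hb : ∀ s : Fin r → ZMod 2, s ≠ 0 → bmat a s ≠ 1) : r ≤ n := by
  classical
  set S : Finset (Fin r → ZMod 2) := Finset.univ.filter (fun δ => eproj a δ ≠ 0) with hS
  -- Step A : r ≤ S.card
  have hker : ∀ s : Fin r → ZMod 2, (∀ δ ∈ S, ∑ i, s i * δ i = 0) → s = 0 := by
    intro s hs
    by_contra hsne
    have hts : ∀ δ ∈ S, ts R s δ = 1 := fun δ hδ => ts_eq_one (hs δ hδ)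
    have hEq : bmat a s * (2 ^ r : R) = (2 ^ r : R) := by
      have h1 : bmat a s * (∑ δ : Fin r → ZMod 2, eproj a δ)
          = ∑ δ : Fin r → ZMod 2, eproj a δ := by
        rw [Finset.mul_sum]
        refine Finset.sum_congr rfl fun δ _ => ?_
        by_cases hδ : δ ∈ S
        · rw [bmat_mul_eproj a ha, hts δ hδ, one_mul]
        · have : eproj a δ = 0 := by
            by_contra h
            exact hδ (Finset.mem_filter.mpr ⟨Finset.mem_univ δ, h⟩)
          rw [this, mul_zero]
      rwa [sum_eproj a] at h1
    have hzero : (2 ^ r : ℕ) • (bmat a s - 1) = 0 := by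
      rw [nsmul_eq_mul]
      push_cast
      linear_combination hEq
    have hzero2 : (2 ^ r : ℕ) • (ρ (bmat a s) - 1) = 0 := by
      have := congrArg ρ hzero
      rw [map_nsmul, map_sub, _root_.map_one, map_zero] at this
      exact this
    have hb1 : ρ (bmat a s) = 1 := by
      rw [← sub_eq_zero]
      refine Matrix.ext fun i j => ?_
      have h6 := congrFun (congrFun hzero2 i) j
      rw [Matrix.smul_apply, nsmul_eq_mul] at h6
      rcases mul_eq_zero.mp h6 with h | h
      · exact absurd h (Nat.cast_ne_zero.mpr (by positivity))
      · exact h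
    have : bmat a s = 1 := hρ (by rw [hb1, _root_.map_one])
    exact hb s hsne this
  let L : (Fin r → ZMod 2) →ₗ[ZMod 2] (↥S → ZMod 2) :=
    { toFun := fun s δ => ∑ i, s i * (δ : Fin r → ZMod 2) i,
      map_add' := by
        intro x y; funext δ; simp [add_mul, Finset.sum_add_distrib]
      map_smul' := by
        intro c x; funext δ; simp [Finset.mul_sum, mul_assoc] }
  have hLinj : Function.Injective L := by
    intro x y hxy
    have h0 : L (x - y) = 0 := by rw [map_sub, hxy, sub_self]
    have : x - y = 0 := by
      apply hker
      intro δ hδ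
      have := congrFun h0 ⟨δ, hδ⟩
      simpa [L] using this
    rwa [sub_eq_zero] at this
  have hrS : r ≤ S.card := by
    have h1 := LinearMap.finrank_le_finrank_of_injective hLinj
    rwa [Module.finrank_pi, Module.finrank_pi, Fintype.card_fin, Fintype.card_coe] at h1
  -- Step B : S.card ≤ n
  have hEx : ∀ δ : ↥S, ∃ k j, ρ (eproj a (δ : Fin r → ZMod 2)) k j ≠ 0 := by
    intro δ
    by_contra h
    push_neg at h
    have h0 : eproj a (δ : Fin r → ZMod 2) ≠ 0 := (Finset.mem_filter.mp δ.2).2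
    apply h0
    apply hρ
    rw [map_zero]
    refine Matrix.ext fun k j => ?_
    simpa using h k j
  choose row col hrc using hEx
  let v : ↥S → (Fin n → Quaternion ℝ) :=
    fun δ => ρ (eproj a (δ : Fin r → ZMod 2)) *ᵥ Pi.single (col δ) 1
  have hvrow : ∀ δ, v δ (row δ) ≠ 0 := by
    intro δ
    have hcomp : v δ (row δ) = ρ (eproj a (δ : Fin r → ZMod 2)) (row δ) (col δ) * 1 :=
      congrFun (Matrix.mulVec_single _ _ _) (row δ)
    rw [hcomp, mul_one]
    exact hrc δ
  have hEv : ∀ δ δ' : ↥S, ρ (eproj a (δ : Fin r → ZMod 2)) *ᵥ v δ'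
      = if δ' = δ then (2 ^ r : ℕ) • v δ else 0 := by
    intro δ δ'
    rw [show v δ' = ρ (eproj a (δ' : Fin r → ZMod 2)) *ᵥ Pi.single (col δ') 1 from rfl,
      Matrix.mulVec_mulVec, ← _root_.map_mul]
    by_cases h : δ' = δ
    · subst h
      rw [if_pos rfl]
      have h2 : eproj a (δ' : Fin r → ZMod 2) * eproj a (δ' : Fin r → ZMod 2)
          = (2 ^ r : ℕ) • eproj a (δ' : Fin r → ZMod 2) := by
        rw [eproj_mul_self a ha, nsmul_eq_mul]; push_cast; ring
      rw [h2, map_nsmul, nsmul_mulVec]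
    · rw [if_neg h]
      have hne : (δ : Fin r → ZMod 2) ≠ (δ' : Fin r → ZMod 2) := by
        intro hc
        exact h (Subtype.ext hc.symm)
      rw [eproj_mul_ne a ha hne, map_zero, Matrix.zero_mulVec]
  have hLI : LinearIndependent (Quaternion ℝ)ᵐᵒᵖ v := by
    rw [Fintype.linearIndependent_iff]
    intro c hc δ₀
    have h2 := congrArg (fun x => ρ (eproj a (δ₀ : Fin r → ZMod 2)) *ᵥ x) hc
    simp only [Matrix.mulVec_zero] at h2
    rw [mulVec_finset_sum] at h2
    have h3 : ∀ δ : ↥S,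
        ρ (eproj a (δ₀ : Fin r → ZMod 2)) *ᵥ (c δ • v δ)
        = if δ = δ₀ then c δ₀ • ((2 ^ r : ℕ) • v δ₀) else 0 := by
      intro δ
      rw [Matrix.mulVec_smul, hEv]
      split
      · rename_i h; subst h; rfl
      · rw [smul_zero]
    rw [Finset.sum_congr rfl fun δ _ => h3 δ, Finset.sum_ite_eq' Finset.univ δ₀,
      if_pos (Finset.mem_univ δ₀)] at h2
    have h4 := congrFun h2.symm (row δ₀)
    rw [Pi.smul_apply, Pi.smul_apply, Pi.zero_apply] at h4
    rw [← MulOpposite.op_unop (c δ₀), op_smul_eq_mul] at h4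
    have h5 : ((2 ^ r : ℕ) • v δ₀ (row δ₀)) ≠ 0 := by
      rw [nsmul_eq_mul]
      exact mul_ne_zero (Nat.cast_ne_zero.mpr (by positivity)) (hvrow δ₀)
    rcases mul_eq_zero.mp h4.symm with h | h
    · exact absurd h h5
    · rw [← MulOpposite.op_unop (c δ₀), h, MulOpposite.op_zero]
  have hScard : S.card ≤ n := by
    haveI : Module.Finite (Quaternion ℝ)ᵐᵒᵖ (Fin n → Quaternion ℝ) :=
      Module.Finite.equiv (opPiEquiv (Quaternion ℝ) n).symm
    have h1 := hLI.fintype_card_le_finrank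
    rwa [(opPiEquiv (Quaternion ℝ) n).finrank_eq, Module.finrank_pi, Fintype.card_fin,
      Fintype.card_coe] at h1
  exact le_trans hrS hScard

open SpAux in
private lemma aux_upper {n r : ℕ}
    (φ : Multiplicative (Fin r → ZMod 2) →* Matrix (Fin n) (Fin n) (Quaternion ℝ))
    (hφ : Function.Injective φ) : r ≤ n := by
  classical
  set g : Fin r → Multiplicative (Fin r → ZMod 2) :=
    fun i => Multiplicative.ofAdd (Pi.single i (1 : ZMod 2)) with hg
  set A : Fin r → Matrix (Fin n) (Fin n) (Quaternion ℝ) := fun i => φ (g i) with hA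
  have hAcomm : ∀ x ∈ Set.range A, ∀ y ∈ Set.range A, x * y = y * x := by
    rintro x ⟨i, rfl⟩ y ⟨j, rfl⟩
    simp only [hA, ← map_mul, mul_comm]
  letI : CommRing (Algebra.adjoin ℝ (Set.range A)) := Algebra.adjoinCommRingOfComm ℝ hAcomm
  let ρ : (Algebra.adjoin ℝ (Set.range A)) →+* Matrix (Fin n) (Fin n) (Quaternion ℝ) :=
    { toFun := Subtype.val, map_one' := rfl, map_mul' := fun _ _ => rfl,
      map_zero' := rfl, map_add' := fun _ _ => rfl }
  have hρ : Function.Injective ρ := Subtype.val_injective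
  -- every element of the image of `φ` lies in the adjoined subalgebra
  have hmem : ∀ s : Fin r → ZMod 2,
      φ (Multiplicative.ofAdd s) ∈ Algebra.adjoin ℝ (Set.range A) := by
    intro s
    have hsum : ∑ i, (s i).val • (Pi.single i (1 : ZMod 2) : Fin r → ZMod 2) = s := by
      funext j
      rw [Finset.sum_apply]
      have h7 : ∀ i : Fin r, ((s i).val • (Pi.single i (1 : ZMod 2) : Fin r → ZMod 2)) j
          = if j = i then ((s i).val : ZMod 2) else 0 := by
        intro i
        rw [Pi.smul_apply, Pi.single_apply]
        split <;> simp [nsmul_eq_mul]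
      rw [Finset.sum_congr rfl fun i _ => h7 i, Finset.sum_ite_eq, if_pos (Finset.mem_univ j)]
      exact ZMod.natCast_rightInverse (s j)
    have hgen : ∀ F : Finset (Fin r),
        φ (Multiplicative.ofAdd (∑ i ∈ F, (s i).val •
          (Pi.single i (1 : ZMod 2) : Fin r → ZMod 2)))
          ∈ Algebra.adjoin ℝ (Set.range A) := by
      intro F
      induction F using Finset.induction_on with
      | empty =>
        simp only [Finset.sum_empty, ofAdd_zero, _root_.map_one]
        exact one_mem _
      | insert _ _ hni ih =>
        rename_i i F
        rw [Finset.sum_insert hni, ofAdd_add, _root_.map_mul]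
        refine mul_mem ?_ ih
        rw [ofAdd_nsmul, map_pow]
        refine pow_mem (Algebra.subset_adjoin ?_) _
        exact ⟨i, rfl⟩
    have := hgen Finset.univ
    rwa [hsum] at this
  -- the restricted homomorphism
  let φT : Multiplicative (Fin r → ZMod 2) →* (Algebra.adjoin ℝ (Set.range A)) :=
    { toFun := fun x => ⟨φ x, by
        have := hmem x.toAdd
        simpa using this⟩,
      map_one' := Subtype.ext (by simp),
      map_mul' := fun x y => Subtype.ext (by simp) }
  let a : Fin r → (Algebra.adjoin ℝ (Set.range A)) := fun i => φT (g i)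
  have hgsq : ∀ i, g i * g i = 1 := by
    intro i
    rw [hg]
    have h11 : (1 + 1 : ZMod 2) = 0 := by decide
    rw [← ofAdd_add, ← Pi.single_add, h11, Pi.single_zero, ofAdd_zero]
  have ha : ∀ i, a i * a i = 1 := by
    intro i
    rw [show a i = φT (g i) from rfl, ← _root_.map_mul, hgsq i, _root_.map_one]
  have hofAdd : ∀ s : Fin r → ZMod 2, (Multiplicative.ofAdd s) = ∏ i, g i ^ (s i).val := by
    intro s
    have hsum : ∑ i, (s i).val • (Pi.single i (1 : ZMod 2) : Fin r → ZMod 2) = s := by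
      funext j
      rw [Finset.sum_apply]
      have h7 : ∀ i : Fin r, ((s i).val • (Pi.single i (1 : ZMod 2) : Fin r → ZMod 2)) j
          = if j = i then ((s i).val : ZMod 2) else 0 := by
        intro i
        rw [Pi.smul_apply, Pi.single_apply]
        split <;> simp [nsmul_eq_mul]
      rw [Finset.sum_congr rfl fun i _ => h7 i, Finset.sum_ite_eq, if_pos (Finset.mem_univ j)]
      exact ZMod.natCast_rightInverse (s j)
    conv_lhs => rw [← hsum]
    rw [ofAdd_sum]
    exact Finset.prod_congr rfl fun i _ => by rw [ofAdd_nsmul]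
  have hbval : ∀ s : Fin r → ZMod 2, bmat a s = φT (Multiplicative.ofAdd s) := by
    intro s
    rw [bmat, hofAdd s, map_prod]
    exact Finset.prod_congr rfl fun i _ => by rw [map_pow]
  refine aux_count _ ρ hρ a ha ?_
  intro s hs h1
  apply hs
  rw [hbval s] at h1
  have h2 : φ (Multiplicative.ofAdd s) = 1 := congrArg Subtype.val h1
  have h3 : Multiplicative.ofAdd s = 1 := hφ (by rw [h2, _root_.map_one])
  simpa using h3

private lemma sgn_add' {R : Type*} [Ring R] (ε ε' : ZMod 2) :
    SpAux.sgn R (ε + ε') = SpAux.sgn R ε * SpAux.sgn R ε' := by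
  have h : ∀ x : ZMod 2, x = 0 ∨ x = 1 := by decide
  have h11 : (1 + 1 : ZMod 2) = 0 := by decide
  have hz : SpAux.sgn R 0 = 1 := if_pos rfl
  have ho : SpAux.sgn R 1 = -1 := if_neg (by decide)
  rcases h ε with h1 | h1 <;> rcases h ε' with h2 | h2 <;> subst h1 <;> subst h2 <;>
    simp [hz, ho, h11] <;> norm_num

private lemma sgn_real_inj {ε ε' : ZMod 2} (h : SpAux.sgn ℝ ε = SpAux.sgn ℝ ε') : ε = ε' := by
  have hc : ∀ x : ZMod 2, x = 0 ∨ x = 1 := by decide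
  rcases hc ε with h1 | h1 <;> rcases hc ε' with h2 | h2 <;> subst h1 <;> subst h2 <;>
    first
      | rfl
      | (exfalso; rw [SpAux.sgn_zero, SpAux.sgn_one] at h <;> norm_num at h)

private lemma aux_lower (n : ℕ) : n ∈ elementaryTwoRanks (SpGroup n) := by
  classical
  let d : (Fin n → ZMod 2) → Matrix (Fin n) (Fin n) (Quaternion ℝ) :=
    fun s => Matrix.diagonal (fun i => ((SpAux.sgn ℝ (s i) : ℝ) : Quaternion ℝ))
  have hmul : ∀ s s', d s * d s' = d (s + s') := by
    intro s s'
    show Matrix.diagonal _ * Matrix.diagonal _ = Matrix.diagonal _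
    rw [Matrix.diagonal_mul_diagonal]
    refine congrArg Matrix.diagonal (funext fun i => ?_)
    show ((SpAux.sgn ℝ (s i) : ℝ) : Quaternion ℝ) * ((SpAux.sgn ℝ (s' i) : ℝ) : Quaternion ℝ)
      = ((SpAux.sgn ℝ ((s + s') i) : ℝ) : Quaternion ℝ)
    rw [← Quaternion.coe_mul, Pi.add_apply, sgn_add']
  have hstar : ∀ s, star (d s) = d s := by
    intro s
    rw [Matrix.star_eq_conjTranspose,
      show d s = Matrix.diagonal (fun i => ((SpAux.sgn ℝ (s i) : ℝ) : Quaternion ℝ)) from rfl,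
      Matrix.diagonal_conjTranspose]
    refine congrArg Matrix.diagonal (funext fun i => ?_)
    show star ((SpAux.sgn ℝ (s i) : ℝ) : Quaternion ℝ) = _
    rw [Quaternion.star_coe]
  have hzero : d 0 = 1 := by
    show Matrix.diagonal _ = 1
    rw [← Matrix.diagonal_one]
    refine congrArg Matrix.diagonal (funext fun i => ?_)
    show ((SpAux.sgn ℝ ((0 : Fin n → ZMod 2) i) : ℝ) : Quaternion ℝ) = 1
    rw [Pi.zero_apply, SpAux.sgn_zero, Quaternion.coe_one]
  have hunit : ∀ s, d s ∈ unitary (Matrix (Fin n) (Fin n) (Quaternion ℝ)) := by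
    intro s
    have hss : s + s = 0 := by
      funext i
      rw [Pi.add_apply]
      have : ∀ x : ZMod 2, x + x = 0 := by decide
      exact this (s i)
    have key : d s * d s = 1 := by rw [hmul, hss, hzero]
    rw [Unitary.mem_iff, hstar]
    exact ⟨key, key⟩
  let ψ : Multiplicative (Fin n → ZMod 2) →* SpGroup n :=
    { toFun := fun x => ⟨d x.toAdd, hunit _⟩,
      map_one' := Subtype.ext (by
        show d (1 : Multiplicative (Fin n → ZMod 2)).toAdd = 1
        rw [toAdd_one, hzero]),
      map_mul' := fun x y => Subtype.ext (by
        show d (x * y).toAdd = d x.toAdd * d y.toAdd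
        rw [toAdd_mul, hmul]) }
  have hinj : Function.Injective ψ := by
    intro x y h
    have h1 : d x.toAdd = d y.toAdd := congrArg Subtype.val h
    have h2 : x.toAdd = y.toAdd := by
      funext i
      have h3 := congrFun (congrFun h1 i) i
      rw [show d x.toAdd i i = ((SpAux.sgn ℝ (x.toAdd i) : ℝ) : Quaternion ℝ) from
          Matrix.diagonal_apply_eq _ i,
        show d y.toAdd i i = ((SpAux.sgn ℝ (y.toAdd i) : ℝ) : Quaternion ℝ) from
          Matrix.diagonal_apply_eq _ i] at h3
      exact sgn_real_inj (Quaternion.coe_injective h3)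
    exact Multiplicative.toAdd.injective h2
  exact ⟨ψ.range, ⟨(MonoidHom.ofInjective hinj).symm⟩⟩

/-- The 2-rank of the compact symplectic group `Sp(n)` equals `n`. -/
theorem twoRank_Sp (n : ℕ) (hn : 1 ≤ n) : twoRank (SpGroup n) = n := by
  have hub : ∀ m ∈ elementaryTwoRanks (SpGroup n), m ≤ n := by
    rintro m ⟨H, ⟨e⟩⟩
    let φ : Multiplicative (Fin m → ZMod 2) →* Matrix (Fin n) (Fin n) (Quaternion ℝ) :=
      { toFun := fun x => ((e.symm x).val.val : Matrix (Fin n) (Fin n) (Quaternion ℝ)),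
        map_one' := by
          show (e.symm 1).val.val = 1
          rw [map_one]; rfl,
        map_mul' := fun x y => by
          show (e.symm (x * y)).val.val = (e.symm x).val.val * (e.symm y).val.val
          rw [map_mul]; rfl }
    have hφinj : Function.Injective φ := by
      intro x y h
      exact e.symm.injective (Subtype.ext (Subtype.ext h))
    exact aux_upper φ hφinj
  have hmem := aux_lower n
  exact le_antisymm (csSup_le ⟨n, hmem⟩ hub) (le_csSup ⟨n, hub⟩ hmem)
end
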